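/- Let G be the group presented with two generators p, γ and the relations p⁹ = 1 and γ⁻¹pγ = p⁴. Then the image of the generator p in G has order exactly 9. -/

import Mathlib

namespace ClassicalZariski.Stmt4

/-- `p` in the free group on the two generators `p, γ`. -/
def p : FreeGroup (Fin 2) := FreeGroup.of 0

/-- `γ` in the free group on the two generators. -/
def g : FreeGroup (Fin 2) := FreeGroup.of 1

/-- The relations `p⁹ = 1` and `γ⁻¹ p γ = p⁴`. -/
def rels : Set (FreeGroup (Fin 2)) :=
  { p ^ 9, (g⁻¹ * p * g) * (p ^ 4)⁻¹ }

/-- The group `G` presented by generators `p, γ` and relations `p⁹ = 1`, `γ⁻¹ p γ = p⁴`. -/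
def G : Type := PresentedGroup rels

instance : Group G := by unfold G; infer_instance

/-- The permutation `x ↦ x + 1` of `ZMod 9`. -/
def pp : Equiv.Perm (ZMod 9) := Equiv.addRight 1

/-- The permutation `x ↦ 7 * x` of `ZMod 9`. -/
def gg : Equiv.Perm (ZMod 9) :=
  ⟨fun x => 7 * x, fun x => 4 * x, by decide, by decide⟩

def f : Fin 2 → Equiv.Perm (ZMod 9) := ![pp, gg]

lemma hrels : ∀ r ∈ rels, FreeGroup.lift f r = 1 := by
  intro r hr
  rcases hr with h | h
  · subst h
    show FreeGroup.lift f (p ^ 9) = 1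
    rw [map_pow]
    simp only [p, FreeGroup.lift_apply_of, f]
    decide
  · rw [Set.mem_singleton_iff] at h
    subst h
    show FreeGroup.lift f ((g⁻¹ * p * g) * (p ^ 4)⁻¹) = 1
    simp only [map_mul, map_inv, map_pow, p, g, FreeGroup.lift_apply_of, f]
    decide

def φ : G →* Equiv.Perm (ZMod 9) := PresentedGroup.toGroup hrels

lemma φ_of : φ (PresentedGroup.of 0 : G) = pp := by
  show PresentedGroup.toGroup hrels (PresentedGroup.of 0) = pp
  rw [PresentedGroup.toGroup.of]
  rfl

theorem orderOf_p : orderOf (PresentedGroup.of 0 : G) = 9 := by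
  set a : G := PresentedGroup.of 0 with ha
  have h9 : a ^ 9 = 1 := by
    have h : ((QuotientGroup.mk' (Subgroup.normalClosure rels)) (p ^ 9)) = 1 := by
      rw [QuotientGroup.mk'_apply, QuotientGroup.eq_one_iff]
      exact Subgroup.subset_normalClosure (Or.inl rfl)
    rw [map_pow] at h
    exact h
  have hdvd : orderOf a ∣ 9 := orderOf_dvd_of_pow_eq_one h9
  have h3 : a ^ 3 ≠ 1 := by
    intro h
    have : pp ^ 3 = 1 := by
      have := congrArg φ h
      rw [map_pow, map_one, φ_of] at this
      exact this
    exact absurd this (by decide)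
  have h1 : a ^ 1 ≠ 1 := by
    intro h
    have : pp ^ 1 = 1 := by
      have := congrArg φ h
      rw [map_pow, map_one, φ_of] at this
      exact this
    exact absurd this (by decide)
  have hle : orderOf a ≤ 9 := Nat.le_of_dvd (by norm_num) hdvd
  have hpos : 0 < orderOf a := by
    rcases Nat.eq_zero_or_pos (orderOf a) with h0 | h0
    · rw [h0] at hdvd; omega
    · exact h0
  interval_cases h : orderOf a
  · exact absurd (pow_orderOf_eq_one a) (h ▸ h1)
  · omega
  · exact absurd (pow_orderOf_eq_one a) (h ▸ h3)
  · omega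
  · omega
  · omega
  · omega
  · omega
  · exact h

end ClassicalZariski.Stmt4
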